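/- Let T₁, …, Tₙ be bounded linear operators on a complex Hilbert space H. Then for all vectors x, y ∈ H, |⟨(∑_{k=1}^n T_k) x, y⟩|² ≤ ⟨(∑_{k=1}^n |T_k|) x, x⟩ · ⟨(∑_{k=1}^n |T_k*|) y, y⟩, where |T| = (T*T)^{1/2}. -/

import Mathlib

set_option synthInstance.maxHeartbeats 1000000
set_option maxHeartbeats 1000000

open ContinuousLinearMap
open scoped InnerProductSpace

section Aux

variable {H : Type*} [NormedAddCommGroup H] [InnerProductSpace ℂ H] [CompleteSpace H]

/-- Cauchy–Schwarz for a positive operator. -/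
lemma pos_op_cauchy_schwarz {P : H →L[ℂ] H} (hP : 0 ≤ P) (u v : H) :
    ‖⟪P u, v⟫_ℂ‖ ≤ Real.sqrt (⟪P u, u⟫_ℂ).re * Real.sqrt (⟪P v, v⟫_ℂ).re := by
  set S := CFC.sqrt P with hSdef
  have hSnn : (0 : H →L[ℂ] H) ≤ S := CFC.sqrt_nonneg P
  have hSS : S * S = P := CFC.sqrt_mul_sqrt_self P hP
  have hSa : IsSelfAdjoint S := IsSelfAdjoint.of_nonneg hSnn
  have hsym : ∀ a b : H, ⟪S a, b⟫_ℂ = ⟪a, S b⟫_ℂ :=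
    (isSelfAdjoint_iff_isSymmetric.mp hSa)
  have happ : ∀ a : H, P a = S (S a) := fun a => by
    rw [← hSS]; rfl
  have key : ∀ a : H, (⟪P a, a⟫_ℂ).re = ‖S a‖ ^ 2 := by
    intro a
    rw [happ, hsym (S a) a]
    simp [← inner_self_eq_norm_sq (𝕜 := ℂ)]
  have h1 : ⟪P u, v⟫_ℂ = ⟪S u, S v⟫_ℂ := by
    rw [happ, hsym (S u) v]
  rw [h1, key, key, Real.sqrt_sq (norm_nonneg _), Real.sqrt_sq (norm_nonneg _)]
  exact norm_inner_le_norm _ _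

/-- The self-adjoint dilation `[[0, T†], [T, 0]]` of `T` on `H ⊕ H`. -/
noncomputable def dil (T : H →L[ℂ] H) : WithLp 2 (H × H) →L[ℂ] WithLp 2 (H × H) :=
  (WithLp.prodContinuousLinearEquiv 2 ℂ H H).symm.toContinuousLinearMap ∘L
    (((adjoint T) ∘L (ContinuousLinearMap.snd ℂ H H)).prod
      (T ∘L (ContinuousLinearMap.fst ℂ H H))) ∘L
    (WithLp.prodContinuousLinearEquiv 2 ℂ H H).toContinuousLinearMap

/-- The block-diagonal operator `[[A, 0], [0, B]]` on `H ⊕ H`. -/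
noncomputable def bd (A B : H →L[ℂ] H) : WithLp 2 (H × H) →L[ℂ] WithLp 2 (H × H) :=
  (WithLp.prodContinuousLinearEquiv 2 ℂ H H).symm.toContinuousLinearMap ∘L
    ((A ∘L (ContinuousLinearMap.fst ℂ H H)).prod
      (B ∘L (ContinuousLinearMap.snd ℂ H H))) ∘L
    (WithLp.prodContinuousLinearEquiv 2 ℂ H H).toContinuousLinearMap

lemma dil_apply_fst (T : H →L[ℂ] H) (z : WithLp 2 (H × H)) :
    (dil T z).fst = adjoint T z.snd := rfl

lemma dil_apply_snd (T : H →L[ℂ] H) (z : WithLp 2 (H × H)) :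
    (dil T z).snd = T z.fst := rfl

lemma bd_apply_fst (A B : H →L[ℂ] H) (z : WithLp 2 (H × H)) :
    (bd A B z).fst = A z.fst := rfl

lemma bd_apply_snd (A B : H →L[ℂ] H) (z : WithLp 2 (H × H)) :
    (bd A B z).snd = B z.snd := rfl

lemma withlp_ext {z w : WithLp 2 (H × H)} (h1 : z.fst = w.fst) (h2 : z.snd = w.snd) :
    z = w := WithLp.ofLp_injective 2 (Prod.ext h1 h2)

lemma dil_isSelfAdjoint (T : H →L[ℂ] H) : IsSelfAdjoint (dil T) := by
  rw [isSelfAdjoint_iff_isSymmetric]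
  intro z w
  show ⟪dil T z, w⟫_ℂ = ⟪z, dil T w⟫_ℂ
  rw [WithLp.prod_inner_apply, WithLp.prod_inner_apply]
  simp only [WithLp.ofLp_fst, WithLp.ofLp_snd]
  rw [dil_apply_fst, dil_apply_snd,
    dil_apply_fst, dil_apply_snd, adjoint_inner_left, adjoint_inner_right]
  exact add_comm _ _

lemma dil_mul_dil (T : H →L[ℂ] H) :
    dil T * dil T = bd (adjoint T * T) (T * adjoint T) := by
  ext z
  · rfl

end Aux

section Aux2

variable {H : Type*} [NormedAddCommGroup H] [InnerProductSpace ℂ H] [CompleteSpace H]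

lemma bd_mul_bd (A B C D : H →L[ℂ] H) : bd A B * bd C D = bd (A * C) (B * D) := by
  ext z
  · rfl

lemma bd_nonneg {A B : H →L[ℂ] H} (hA : 0 ≤ A) (hB : 0 ≤ B) : 0 ≤ bd A B := by
  rw [ContinuousLinearMap.nonneg_iff_isPositive] at hA hB ⊢
  constructor
  · intro z w
    show ⟪bd A B z, w⟫_ℂ = ⟪z, bd A B w⟫_ℂ
    rw [WithLp.prod_inner_apply, WithLp.prod_inner_apply]
    simp only [WithLp.ofLp_fst, WithLp.ofLp_snd]
    rw [bd_apply_fst, bd_apply_snd,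
      bd_apply_fst, bd_apply_snd]
    exact congrArg₂ (· + ·) (isSelfAdjoint_iff_isSymmetric.mp hA.isSelfAdjoint z.fst w.fst)
      (isSelfAdjoint_iff_isSymmetric.mp hB.isSelfAdjoint z.snd w.snd)
  · intro z
    have : (bd A B).reApplyInnerSelf z = (⟪A z.fst, z.fst⟫_ℂ).re + (⟪B z.snd, z.snd⟫_ℂ).re := by
      simp only [ContinuousLinearMap.reApplyInnerSelf]
      rw [WithLp.prod_inner_apply]
      simp only [WithLp.ofLp_fst, WithLp.ofLp_snd]
      rw [bd_apply_fst, bd_apply_snd]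
      simp
    rw [this]
    exact add_nonneg (hA.re_inner_nonneg_left z.fst) (hB.re_inner_nonneg_left z.snd)

lemma sqrt_dil_sq (T : H →L[ℂ] H) :
    CFC.sqrt (dil T * dil T) =
      bd (CFC.sqrt (adjoint T * T)) (CFC.sqrt (T * adjoint T)) := by
  have h1 : (0:H→L[ℂ]H) ≤ adjoint T * T := by
    rw [ContinuousLinearMap.nonneg_iff_isPositive]
    exact ContinuousLinearMap.isPositive_adjoint_comp_self T
  have h2 : (0:H→L[ℂ]H) ≤ T * adjoint T := by
    rw [ContinuousLinearMap.nonneg_iff_isPositive]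
    exact ContinuousLinearMap.isPositive_self_comp_adjoint T
  refine CFC.sqrt_unique ?_ (bd_nonneg (CFC.sqrt_nonneg _) (CFC.sqrt_nonneg _))
  rw [bd_mul_bd, CFC.sqrt_mul_sqrt_self _ h1, CFC.sqrt_mul_sqrt_self _ h2, dil_mul_dil]

lemma posPart_add_negPart_dil (T : H →L[ℂ] H) :
    (dil T)⁺ + (dil T)⁻ =
      bd (CFC.sqrt (adjoint T * T)) (CFC.sqrt (T * adjoint T)) := by
  rw [← sqrt_dil_sq]
  refine (CFC.sqrt_unique ?_
    (add_nonneg (CFC.posPart_nonneg (dil T)) (CFC.negPart_nonneg (dil T)))).symm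
  have hsa := dil_isSelfAdjoint T
  have hd : (dil T)⁺ - (dil T)⁻ = dil T := CFC.posPart_sub_negPart _ hsa
  have : ((dil T)⁺ + (dil T)⁻) * ((dil T)⁺ + (dil T)⁻)
      = ((dil T)⁺ - (dil T)⁻) * ((dil T)⁺ - (dil T)⁻) := by
    simp only [mul_add, add_mul, mul_sub, sub_mul, CFC.posPart_mul_negPart,
      CFC.negPart_mul_posPart]
    abel
  rw [this, hd]

lemma sqrt_inner_re_nonneg (A : H →L[ℂ] H) (z : H) :
    0 ≤ (⟪CFC.sqrt A z, z⟫_ℂ).re :=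
  ((ContinuousLinearMap.nonneg_iff_isPositive _).mp
    (CFC.sqrt_nonneg (a := A))).re_inner_nonneg_left z

/-- Mixed Schwarz inequality for a single operator. -/
lemma mixed_schwarz_single (T : H →L[ℂ] H) (x y : H) :
    ‖⟪T x, y⟫_ℂ‖ ≤
      Real.sqrt (⟪CFC.sqrt (adjoint T * T) x, x⟫_ℂ).re *
        Real.sqrt (⟪CFC.sqrt (T * adjoint T) y, y⟫_ℂ).re := by
  set v : WithLp 2 (H × H) := (WithLp.equiv 2 (H × H)).symm (x, 0) with hv
  set w : WithLp 2 (H × H) := (WithLp.equiv 2 (H × H)).symm (0, y) with hw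
  have hvf : v.fst = x := rfl
  have hvs : v.snd = (0:H) := rfl
  have hwf : w.fst = (0:H) := rfl
  have hws : w.snd = y := rfl
  have hsa := dil_isSelfAdjoint T
  have hP : (0:_) ≤ (dil T)⁺ := CFC.posPart_nonneg (dil T)
  have hN : (0:_) ≤ (dil T)⁻ := CFC.negPart_nonneg (dil T)
  -- ⟪T x, y⟫ = ⟪dil T v, w⟫
  have hTvW : ⟪dil T v, w⟫_ℂ = ⟪T x, y⟫_ℂ := by
    rw [WithLp.prod_inner_apply]
    simp only [WithLp.ofLp_fst, WithLp.ofLp_snd]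
    rw [dil_apply_fst, dil_apply_snd, hvf, hvs, hws, hwf]
    simp
  -- split into positive and negative parts
  have hsplit : ⟪dil T v, w⟫_ℂ = ⟪(dil T)⁺ v, w⟫_ℂ - ⟪(dil T)⁻ v, w⟫_ℂ := by
    conv_lhs => rw [← CFC.posPart_sub_negPart (dil T) hsa]
    rw [ContinuousLinearMap.sub_apply, inner_sub_left]
  set a₁ := (⟪(dil T)⁺ v, v⟫_ℂ).re
  set a₂ := (⟪(dil T)⁻ v, v⟫_ℂ).re
  set b₁ := (⟪(dil T)⁺ w, w⟫_ℂ).re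
  set b₂ := (⟪(dil T)⁻ w, w⟫_ℂ).re
  have ha₁ : 0 ≤ a₁ := ((ContinuousLinearMap.nonneg_iff_isPositive _).mp hP).re_inner_nonneg_left v
  have ha₂ : 0 ≤ a₂ := ((ContinuousLinearMap.nonneg_iff_isPositive _).mp hN).re_inner_nonneg_left v
  have hb₁ : 0 ≤ b₁ := ((ContinuousLinearMap.nonneg_iff_isPositive _).mp hP).re_inner_nonneg_left w
  have hb₂ : 0 ≤ b₂ := ((ContinuousLinearMap.nonneg_iff_isPositive _).mp hN).re_inner_nonneg_left w
  have cs1 : ‖⟪(dil T)⁺ v, w⟫_ℂ‖ ≤ Real.sqrt a₁ * Real.sqrt b₁ :=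
    pos_op_cauchy_schwarz hP v w
  have cs2 : ‖⟪(dil T)⁻ v, w⟫_ℂ‖ ≤ Real.sqrt a₂ * Real.sqrt b₂ :=
    pos_op_cauchy_schwarz hN v w
  -- identify the diagonal sums
  have hsum := posPart_add_negPart_dil T
  have hxa : a₁ + a₂ = (⟪CFC.sqrt (adjoint T * T) x, x⟫_ℂ).re := by
    have : ((dil T)⁺ + (dil T)⁻) v = (dil T)⁺ v + (dil T)⁻ v := rfl
    have h2 : (⟪((dil T)⁺ + (dil T)⁻) v, v⟫_ℂ).re = a₁ + a₂ := by
      rw [this, inner_add_left, Complex.add_re]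
    rw [← h2, hsum, WithLp.prod_inner_apply]
    simp only [WithLp.ofLp_fst, WithLp.ofLp_snd]
    rw [bd_apply_fst, bd_apply_snd, hvf, hvs]
    simp
  have hyb : b₁ + b₂ = (⟪CFC.sqrt (T * adjoint T) y, y⟫_ℂ).re := by
    have : ((dil T)⁺ + (dil T)⁻) w = (dil T)⁺ w + (dil T)⁻ w := rfl
    have h2 : (⟪((dil T)⁺ + (dil T)⁻) w, w⟫_ℂ).re = b₁ + b₂ := by
      rw [this, inner_add_left, Complex.add_re]
    rw [← h2, hsum, WithLp.prod_inner_apply]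
    simp only [WithLp.ofLp_fst, WithLp.ofLp_snd]
    rw [bd_apply_fst, bd_apply_snd, hwf, hws]
    simp
  rw [← hxa, ← hyb, ← hTvW, hsplit]
  calc ‖⟪(dil T)⁺ v, w⟫_ℂ - ⟪(dil T)⁻ v, w⟫_ℂ‖
      ≤ ‖⟪(dil T)⁺ v, w⟫_ℂ‖ + ‖⟪(dil T)⁻ v, w⟫_ℂ‖ := norm_sub_le _ _
    _ ≤ Real.sqrt a₁ * Real.sqrt b₁ + Real.sqrt a₂ * Real.sqrt b₂ := add_le_add cs1 cs2
    _ ≤ Real.sqrt (a₁ + a₂) * Real.sqrt (b₁ + b₂) := by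
        have := Real.sum_sqrt_mul_sqrt_le (Finset.univ : Finset (Fin 2))
          (f := ![a₁, a₂]) (g := ![b₁, b₂])
          (by intro i; fin_cases i <;> assumption)
          (by intro i; fin_cases i <;> assumption)
        simpa [Fin.sum_univ_two] using this
end Aux2

/-- `|⟨(∑ T k) x, y⟩|² ≤ ⟨(∑ |T k|) x, x⟩ ⟨(∑ |T k *|) y, y⟩`, where `|T| = (T† T)^{1/2}`. -/
theorem mixed_schwarz_sum {H : Type*} [NormedAddCommGroup H] [InnerProductSpace ℂ H]
    [CompleteSpace H] {n : ℕ} (T : Fin n → (H →L[ℂ] H)) (x y : H) :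
    ‖⟪(∑ k, T k) x, y⟫_ℂ‖ ^ 2 ≤
      (⟪(∑ k, CFC.sqrt (adjoint (T k) * T k)) x, x⟫_ℂ).re *
        (⟪(∑ k, CFC.sqrt (T k * adjoint (T k))) y, y⟫_ℂ).re := by
  set a : Fin n → ℝ := fun k => (⟪CFC.sqrt (adjoint (T k) * T k) x, x⟫_ℂ).re with hadef
  set b : Fin n → ℝ := fun k => (⟪CFC.sqrt (T k * adjoint (T k)) y, y⟫_ℂ).re with hbdef
  have ha : ∀ k, 0 ≤ a k := fun k => sqrt_inner_re_nonneg _ x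
  have hb : ∀ k, 0 ≤ b k := fun k => sqrt_inner_re_nonneg _ y
  have hA : (⟪(∑ k, CFC.sqrt (adjoint (T k) * T k)) x, x⟫_ℂ).re = ∑ k, a k := by
    rw [ContinuousLinearMap.sum_apply, sum_inner]
    simp [hadef]
  have hB : (⟪(∑ k, CFC.sqrt (T k * adjoint (T k))) y, y⟫_ℂ).re = ∑ k, b k := by
    rw [ContinuousLinearMap.sum_apply, sum_inner]
    simp [hbdef]
  have hAnn : 0 ≤ ∑ k, a k := Finset.sum_nonneg fun k _ => ha k
  have hBnn : 0 ≤ ∑ k, b k := Finset.sum_nonneg fun k _ => hb k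
  have step : ‖⟪(∑ k, T k) x, y⟫_ℂ‖ ≤
      Real.sqrt (∑ k, a k) * Real.sqrt (∑ k, b k) := by
    calc ‖⟪(∑ k, T k) x, y⟫_ℂ‖ = ‖∑ k, ⟪T k x, y⟫_ℂ‖ := by
          rw [ContinuousLinearMap.sum_apply, sum_inner]
      _ ≤ ∑ k, ‖⟪T k x, y⟫_ℂ‖ := norm_sum_le _ _
      _ ≤ ∑ k, Real.sqrt (a k) * Real.sqrt (b k) :=
          Finset.sum_le_sum fun k _ => mixed_schwarz_single (T k) x y
      _ ≤ Real.sqrt (∑ k, a k) * Real.sqrt (∑ k, b k) :=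
          Real.sum_sqrt_mul_sqrt_le _ ha hb
  rw [hA, hB]
  calc ‖⟪(∑ k, T k) x, y⟫_ℂ‖ ^ 2
      ≤ (Real.sqrt (∑ k, a k) * Real.sqrt (∑ k, b k)) ^ 2 :=
        pow_le_pow_left₀ (norm_nonneg _) step 2
    _ = (∑ k, a k) * (∑ k, b k) := by
        rw [mul_pow, Real.sq_sqrt hAnn, Real.sq_sqrt hBnn]
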